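/- arXiv:1204.5158 — 3 statements merged into one kernel-verified Lean document; each statement's English description precedes it below -/
import Mathlib

section
/- For g in SL(2,R) and a nonzero vector u in R², define the cocycle c_u(g) by the implicit equation n_{c_u(g)} = Ψ(g u)^{-1} g Ψ(u), where n_s = [[1,s],[0,1]]. Then the matrix Ψ(g u)^{-1} g Ψ(u) is indeed upper unipotent, so c_u(g) is well defined, and it satisfies c_{u_0}(g n_s) = c_{u_0}(g) + s and c_{u_0}(g a_t) = e^{-t} c_{u_0}(g), where u_0 = (1,0). -/
open Matrix

/-- The section `Ψ : ℝ² \ {0} → SL(2,ℝ)`. -/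
noncomputable def Psi (v : ℝ × ℝ) : Matrix (Fin 2) (Fin 2) ℝ :=
  !![v.1, -v.2 / (v.1 ^ 2 + v.2 ^ 2); v.2, v.1 / (v.1 ^ 2 + v.2 ^ 2)]

/-- The horocyclic matrix `n_s = [[1, s], [0, 1]]`. -/
def nMat (s : ℝ) : Matrix (Fin 2) (Fin 2) ℝ := !![1, s; 0, 1]

/-- The geodesic matrix `a_t = diag(e^{t/2}, e^{-t/2})`. -/
noncomputable def aMat (t : ℝ) : Matrix (Fin 2) (Fin 2) ℝ :=
  !![Real.exp (t / 2), 0; 0, Real.exp (-t / 2)]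

/-- The linear action of a `2×2` matrix on `ℝ²`. -/
def act (g : Matrix (Fin 2) (Fin 2) ℝ) (u : ℝ × ℝ) : ℝ × ℝ :=
  (g 0 0 * u.1 + g 0 1 * u.2, g 1 0 * u.1 + g 1 1 * u.2)

/-- The cocycle `c_u(g)`, read off as the `(0,1)` entry of `Ψ(gu)⁻¹ g Ψ(u)`. -/
noncomputable def coc (g : Matrix (Fin 2) (Fin 2) ℝ) (u : ℝ × ℝ) : ℝ :=
  ((Psi (act g u))⁻¹ * g * Psi u) 0 1

lemma sq_ne (u : ℝ × ℝ) (hu : u ≠ 0) : u.1^2 + u.2^2 ≠ 0 := by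
  intro h
  apply hu
  have h1 : u.1 = 0 := by nlinarith [sq_nonneg u.1, sq_nonneg u.2]
  have h2 : u.2 = 0 := by nlinarith [sq_nonneg u.1, sq_nonneg u.2]
  exact Prod.ext h1 h2

lemma Psi_inv (v : ℝ × ℝ) (hv : v ≠ 0) :
    (Psi v)⁻¹ = !![v.1/(v.1^2+v.2^2), v.2/(v.1^2+v.2^2); -v.2, v.1] := by
  have h := sq_ne v hv
  apply Matrix.inv_eq_left_inv
  ext i j
  fin_cases i <;> fin_cases j <;>
    simp [Psi, Matrix.mul_apply, Fin.sum_univ_two] <;> (first | (rw [← div_self h]; ring1) | (field_simp; ring) | ring)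

lemma act_ne (g : Matrix (Fin 2) (Fin 2) ℝ) (hg : g.det = 1) (u : ℝ × ℝ) (hu : u ≠ 0) :
    act g u ≠ 0 := by
  rw [Matrix.det_fin_two] at hg
  intro h
  rw [Prod.ext_iff] at h
  obtain ⟨h1, h2⟩ := h
  simp only [act, Prod.fst_zero, Prod.snd_zero] at h1 h2
  apply hu
  refine Prod.ext ?_ ?_
  · show u.1 = 0
    linear_combination g 1 1 * h1 - g 0 1 * h2 - u.1 * hg
  · show u.2 = 0
    linear_combination g 0 0 * h2 - g 1 0 * h1 - u.2 * hg

lemma main_eq (g : Matrix (Fin 2) (Fin 2) ℝ) (hg : g.det = 1) (u : ℝ × ℝ) (hu : u ≠ 0) :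
    (Psi (act g u))⁻¹ * g * Psi u = nMat (coc g u) := by
  have hgu := act_ne g hg u hu
  have h1 := sq_ne u hu
  have h2 := sq_ne _ hgu
  rw [Matrix.det_fin_two] at hg
  unfold coc
  rw [Psi_inv _ hgu]
  simp only [act] at h2 ⊢
  ext i j
  fin_cases i <;> fin_cases j
  · simp only [Matrix.mul_apply, Fin.sum_univ_two]
    simp [Psi, nMat, act]
    rw [← div_self h2]
    ring
  · simp only [Matrix.mul_apply, Fin.sum_univ_two]
    simp [Psi, nMat, act]
  · simp only [Matrix.mul_apply, Fin.sum_univ_two]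
    simp [Psi, nMat, act]
    ring
  · simp only [Matrix.mul_apply, Fin.sum_univ_two]
    simp [Psi, nMat, act]
    rw [← div_self h1]
    linear_combination (u.1 ^ 2 + u.2 ^ 2) / (u.1 ^ 2 + u.2 ^ 2) * hg

lemma u0_ne : ((1:ℝ), (0:ℝ)) ≠ 0 := by
  simp [Prod.ext_iff]

lemma coc_u0 (g : Matrix (Fin 2) (Fin 2) ℝ) (hg : g.det = 1) :
    coc g (1, 0) = (g 0 0 * g 0 1 + g 1 0 * g 1 1) / ((g 0 0) ^ 2 + (g 1 0) ^ 2) := by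
  have hgu := act_ne g hg (1, 0) u0_ne
  have h2 := sq_ne _ hgu
  simp only [act, mul_one, mul_zero, add_zero] at h2
  unfold coc
  rw [Psi_inv _ hgu]
  simp only [Matrix.mul_apply, Fin.sum_univ_two]
  simp [Psi, act]
  field_simp
  try ring

lemma sq_ne' (g : Matrix (Fin 2) (Fin 2) ℝ) (hg : g.det = 1) :
    (g 0 0) ^ 2 + (g 1 0) ^ 2 ≠ 0 := by
  have hgu := act_ne g hg (1, 0) u0_ne
  have h2 := sq_ne _ hgu
  simpa [act] using h2

lemma det_nMat (s : ℝ) : (nMat s).det = 1 := by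
  simp [nMat, Matrix.det_fin_two_of]

lemma det_aMat (t : ℝ) : (aMat t).det = 1 := by
  simp [aMat, Matrix.det_fin_two_of, ← Real.exp_add]
  ring


/-- The matrix `Ψ(gu)⁻¹ g Ψ(u)` is upper unipotent, so the cocycle `c_u(g)` is well
defined by `n_{c_u(g)} = Ψ(gu)⁻¹ g Ψ(u)`; and it satisfies
`c_{u₀}(g n_s) = c_{u₀}(g) + s` and `c_{u₀}(g a_t) = e^{-t} c_{u₀}(g)`, where `u₀ = (1,0)`. -/
theorem cocycle_welldefined_and_props (g : Matrix (Fin 2) (Fin 2) ℝ) (hg : g.det = 1)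
    (u : ℝ × ℝ) (hu : u ≠ 0) :
    (Psi (act g u))⁻¹ * g * Psi u = nMat (coc g u) ∧
    (∀ s : ℝ, coc (g * nMat s) (1, 0) = coc g (1, 0) + s) ∧
    (∀ t : ℝ, coc (g * aMat t) (1, 0) = Real.exp (-t) * coc g (1, 0)) := by
  refine ⟨main_eq g hg u hu, ?_, ?_⟩
  · intro s
    have hgs : (g * nMat s).det = 1 := by rw [Matrix.det_mul, hg, det_nMat, one_mul]
    have hd := sq_ne' g hg
    rw [coc_u0 _ hgs, coc_u0 g hg]
    simp only [Matrix.mul_apply, Fin.sum_univ_two, nMat, Matrix.cons_val_zero,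
      Matrix.cons_val_one, Matrix.head_cons, Matrix.cons_val', Matrix.empty_val',
      Matrix.cons_val_fin_one, Matrix.head_fin_const, Matrix.of_apply]
    field_simp
    linear_combination (g 0 0 * g 0 1 + g 0 0 ^ 2 * s + s * g 1 0 ^ 2 + g 1 0 * g 1 1) * mul_inv_cancel₀ hd
  · intro t
    have hgt : (g * aMat t).det = 1 := by rw [Matrix.det_mul, hg, det_aMat, one_mul]
    have hd := sq_ne' g hg
    have he : Real.exp (t / 2) ≠ 0 := Real.exp_ne_zero _
    have hF : Real.exp (-t / 2) = (Real.exp (t / 2))⁻¹ := by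
      rw [← Real.exp_neg]; congr 1; ring
    have hT : Real.exp (-t) = ((Real.exp (t / 2))⁻¹) ^ 2 := by
      rw [← Real.exp_neg, sq, ← Real.exp_add]; congr 1; ring
    rw [coc_u0 _ hgt, coc_u0 g hg]
    simp only [Matrix.mul_apply, Fin.sum_univ_two, aMat, Matrix.cons_val_zero,
      Matrix.cons_val_one, Matrix.head_cons, Matrix.cons_val', Matrix.empty_val',
      Matrix.cons_val_fin_one, Matrix.head_fin_const, Matrix.of_apply]
    rw [hF, hT]
    have hd4 : Real.exp (t / 2) * ((g 0 0 * Real.exp (t / 2)) ^ 2 + (g 1 0 * Real.exp (t / 2)) ^ 2) ≠ 0 := by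
      apply mul_ne_zero he
      intro h
      have h2 : (g 0 0 ^ 2 + g 1 0 ^ 2) * Real.exp (t / 2) ^ 2 = 0 := by linear_combination h
      rcases mul_eq_zero.mp h2 with h3 | h3
      · exact hd h3
      · exact pow_ne_zero 2 he h3
    field_simp
    have hE : Real.exp (t / 2) ^ 2 * g 0 0 ^ 2 + Real.exp (t / 2) ^ 2 * g 1 0 ^ 2 ≠ 0 := by
      rw [← mul_add]; exact mul_ne_zero (pow_ne_zero 2 (Real.exp_ne_zero _)) hd
    linear_combination (g 0 0 * g 0 1 + g 1 0 * g 1 1) * mul_inv_cancel₀ hE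
end

section
/- With the l² norm on M(2,R) and the Euclidean norm on R², for nonzero vectors u, v in R² with |v| ≤ |u|, the set {s ∈ R : κ(u,v,s) ≤ 1} is exactly the interval [−Θ(u,v), Θ(u,v)] with Θ(u,v) = (1/(|u||v|)) √(1 − |v|²/|u|²); if |v| > |u| this set is empty. -/
open Matrix

/-- The Frobenius (`l²`) norm on `2×2` real matrices. -/
noncomputable def frob (m : Matrix (Fin 2) (Fin 2) ℝ) : ℝ :=
  Real.sqrt (∑ i : Fin 2, ∑ j : Fin 2, (m i j) ^ 2)

/-- The Euclidean norm on `ℝ²`. -/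
noncomputable def enorm2 (v : ℝ × ℝ) : ℝ := Real.sqrt (v.1 ^ 2 + v.2 ^ 2)

/-- `κ(u,v,s) = ‖ Ψ(v) [[1,s],[0,0]] Ψ(u)⁻¹ ‖` for the Frobenius norm. -/
noncomputable def kappa (u v : ℝ × ℝ) (s : ℝ) : ℝ :=
  frob (Psi v * !![1, s; 0, 0] * (Psi u)⁻¹)

/-- `Θ(u,v) = (1/(|u||v|)) √(1 − |v|²/|u|²)`. -/
noncomputable def Theta (u v : ℝ × ℝ) : ℝ :=
  (1 / (enorm2 u * enorm2 v)) * Real.sqrt (1 - enorm2 v ^ 2 / enorm2 u ^ 2)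

lemma kappa_sq (u v : ℝ × ℝ) (s : ℝ) (hA : u.1 ^ 2 + u.2 ^ 2 ≠ 0) :
    kappa u v s ^ 2 = ((v.1 ^ 2 + v.2 ^ 2) +
      s ^ 2 * (u.1 ^ 2 + u.2 ^ 2) ^ 2 * (v.1 ^ 2 + v.2 ^ 2)) / (u.1 ^ 2 + u.2 ^ 2) := by
  have hinv : (Psi u)⁻¹ =
      !![u.1 / (u.1 ^ 2 + u.2 ^ 2), u.2 / (u.1 ^ 2 + u.2 ^ 2); -u.2, u.1] := by
    apply inv_eq_right_inv
    ext i j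
    fin_cases i <;> fin_cases j <;>
      simp [Psi, Matrix.mul_apply, Fin.sum_univ_two] <;> field_simp <;> ring
  rw [kappa, hinv, frob, Real.sq_sqrt (by positivity)]
  simp [Psi, Matrix.mul_apply, Fin.sum_univ_two]
  field_simp
  ring

/-- For the Frobenius norm: if `|v| ≤ |u|`, the set `{s : κ(u,v,s) ≤ 1}` is the interval
`[−Θ(u,v), Θ(u,v)]`; if `|v| > |u|` it is empty. -/
theorem kappa_sublevel (u v : ℝ × ℝ) (hu : u ≠ 0) (hv : v ≠ 0) :
    (enorm2 v ≤ enorm2 u →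
      {s : ℝ | kappa u v s ≤ 1} = Set.Icc (-(Theta u v)) (Theta u v)) ∧
    (enorm2 u < enorm2 v → {s : ℝ | kappa u v s ≤ 1} = ∅) := by
  set A := u.1 ^ 2 + u.2 ^ 2 with hAdef
  set B := v.1 ^ 2 + v.2 ^ 2 with hBdef
  have hA : 0 < A := by
    rcases eq_or_ne u.1 0 with h | h
    · have h2 : u.2 ≠ 0 := fun h2 => hu (Prod.ext h h2)
      positivity
    · positivity
  have hB : 0 < B := by
    rcases eq_or_ne v.1 0 with h | h
    · have h2 : v.2 ≠ 0 := fun h2 => hv (Prod.ext h h2)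
      positivity
    · positivity
  have heu : enorm2 u = Real.sqrt A := rfl
  have hev : enorm2 v = Real.sqrt B := rfl
  have heuA : enorm2 u ^ 2 = A := Real.sq_sqrt hA.le
  have hevB : enorm2 v ^ 2 = B := Real.sq_sqrt hB.le
  have hknn : ∀ s : ℝ, 0 ≤ kappa u v s := fun s => Real.sqrt_nonneg _
  have hkiff : ∀ s : ℝ, kappa u v s ≤ 1 ↔ B + s ^ 2 * A ^ 2 * B ≤ A := by
    intro s
    have hk := kappa_sq u v s hA.ne'
    constructor
    · intro h
      have h2 : kappa u v s ^ 2 ≤ 1 := by nlinarith [hknn s]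
      rw [hk, div_le_one hA] at h2
      exact h2
    · intro h
      have h2 : kappa u v s ^ 2 ≤ 1 := by rw [hk, div_le_one hA]; exact h
      nlinarith [hknn s]
  constructor
  · intro hle
    have hBA : B ≤ A := by
      rw [heu, hev] at hle
      nlinarith [Real.sq_sqrt hA.le, Real.sq_sqrt hB.le, Real.sqrt_nonneg A, Real.sqrt_nonneg B]
    have hΘnn : 0 ≤ Theta u v := by
      rw [Theta, heu, hev]
      positivity
    have hΘsq : Theta u v ^ 2 = (A - B) / (A ^ 2 * B) := by
      rw [Theta, mul_pow, div_pow, one_pow, mul_pow, heuA, hevB,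
        Real.sq_sqrt (by rw [sub_nonneg]; exact div_le_one_of_le₀ hBA hA.le)]
      field_simp
    ext s
    simp only [Set.mem_setOf_eq, Set.mem_Icc, hkiff s]
    constructor
    · intro h
      have hs2 : s ^ 2 ≤ Theta u v ^ 2 := by
        rw [hΘsq, le_div_iff₀ (by positivity)]
        nlinarith
      have := abs_le_of_sq_le_sq' hs2 hΘnn
      exact ⟨this.1, this.2⟩
    · rintro ⟨h1, h2⟩
      have hs2 : s ^ 2 ≤ Theta u v ^ 2 := sq_le_sq' h1 h2
      rw [hΘsq, le_div_iff₀ (by positivity)] at hs2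
      nlinarith
  · intro hlt
    have hAB : A < B := by
      rw [heu, hev] at hlt
      nlinarith [Real.sq_sqrt hA.le, Real.sq_sqrt hB.le, Real.sqrt_nonneg A, Real.sqrt_nonneg B]
    ext s
    simp only [Set.mem_setOf_eq, Set.mem_empty_iff_false, iff_false, hkiff s]
    intro h
    nlinarith [mul_nonneg (mul_nonneg (sq_nonneg s) (sq_nonneg A)) hB.le]
end

section
/- With the l² norm on M(2,R), the set D_0(u) = {v ∈ R² : ∃ s ∈ R, κ(u,v,s) < 1} ∪ {0} equals the open Euclidean disk of center 0 and radius |u|, for every nonzero u in R². -/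
open Matrix

/-- The Euclidean norm on `ℝ²`. -/
noncomputable def enorm₂ (v : ℝ × ℝ) : ℝ := Real.sqrt (v.1 ^ 2 + v.2 ^ 2)

lemma rpos (u : ℝ × ℝ) (hu : u ≠ 0) : 0 < u.1 ^ 2 + u.2 ^ 2 := by
  rcases eq_or_ne u.1 0 with h1 | h1
  · rcases eq_or_ne u.2 0 with h2 | h2
    · exact absurd (Prod.ext h1 h2) hu
    · positivity
  · positivity

lemma PsiInv (u : ℝ × ℝ) (hu : u ≠ 0) :
    (Psi u)⁻¹ = !![u.1 / (u.1 ^ 2 + u.2 ^ 2), u.2 / (u.1 ^ 2 + u.2 ^ 2); -u.2, u.1] := by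
  have hr := (rpos u hu).ne'
  apply Matrix.inv_eq_right_inv
  rw [Psi, Matrix.mul_fin_two]
  ext i j
  fin_cases i <;> fin_cases j <;>
    simp [Matrix.one_apply] <;> field_simp <;> ring

lemma kappa_eq (u v : ℝ × ℝ) (hu : u ≠ 0) (s : ℝ) :
    kappa u v s = Real.sqrt ((v.1 ^ 2 + v.2 ^ 2) *
      (1 / (u.1 ^ 2 + u.2 ^ 2) + s ^ 2 * (u.1 ^ 2 + u.2 ^ 2))) := by
  have hr := (rpos u hu).ne'
  rw [kappa, PsiInv u hu, Psi, Matrix.mul_fin_two, Matrix.mul_fin_two, frob]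
  congr 1
  simp [Fin.sum_univ_two]
  field_simp
  ring

/-- For the Frobenius norm, the set `D₀(u) = {v ≠ 0 : ∃ s, κ(u,v,s) < 1} ∪ {0}`
is the open Euclidean disk of center `0` and radius `|u|`. -/
theorem D0_eq_ball (u : ℝ × ℝ) (hu : u ≠ 0) :
    ({v : ℝ × ℝ | v ≠ 0 ∧ ∃ s : ℝ, kappa u v s < 1} ∪ {0}) =
      {v : ℝ × ℝ | enorm₂ v < enorm₂ u} := by
  have hru := rpos u hu
  ext v
  simp only [Set.mem_union, Set.mem_setOf_eq, Set.mem_singleton_iff, enorm₂]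
  constructor
  · rintro (⟨hv, s, hs⟩ | rfl)
    · rw [kappa_eq u v hu s] at hs
      have h1 : (v.1 ^ 2 + v.2 ^ 2) * (1 / (u.1 ^ 2 + u.2 ^ 2) + s ^ 2 * (u.1 ^ 2 + u.2 ^ 2)) < 1 := by
        have := (Real.sqrt_lt' one_pos).mp hs
        simpa using this
      have hrv := rpos v hv
      have key : (v.1 ^ 2 + v.2 ^ 2) * (1 / (u.1 ^ 2 + u.2 ^ 2) + s ^ 2 * (u.1 ^ 2 + u.2 ^ 2)) *
          (u.1 ^ 2 + u.2 ^ 2) = (v.1 ^ 2 + v.2 ^ 2) * (1 + s ^ 2 * (u.1 ^ 2 + u.2 ^ 2) ^ 2) := by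
        have hr := hru.ne'
        field_simp
      have h3 := mul_lt_mul_of_pos_right h1 hru
      rw [key, one_mul] at h3
      have h2 : v.1 ^ 2 + v.2 ^ 2 < u.1 ^ 2 + u.2 ^ 2 := by
        nlinarith [mul_nonneg hrv.le (mul_nonneg (sq_nonneg s) (sq_nonneg (u.1 ^ 2 + u.2 ^ 2)))]
      exact Real.sqrt_lt_sqrt (by positivity) h2
    · simpa using Real.sqrt_pos.mpr hru
  · intro h
    rcases eq_or_ne v 0 with rfl | hv
    · exact Or.inr rfl
    · refine Or.inl ⟨hv, 0, ?_⟩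
      have h2 : v.1 ^ 2 + v.2 ^ 2 < u.1 ^ 2 + u.2 ^ 2 :=
        (Real.sqrt_lt_sqrt_iff (by positivity)).mp h
      rw [kappa_eq u v hu 0]
      rw [Real.sqrt_lt' one_pos, one_pow]
      have : (v.1 ^ 2 + v.2 ^ 2) * (1 / (u.1 ^ 2 + u.2 ^ 2) + 0 ^ 2 * (u.1 ^ 2 + u.2 ^ 2)) = (v.1 ^ 2 + v.2 ^ 2) / (u.1 ^ 2 + u.2 ^ 2) := by ring
      rw [this]; exact (div_lt_one hru).mpr h2
end
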